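/- Let Q = [a, a+h] × [b, b+h] be a square in ℝ², and let S = {(a + i·h/2, b + j·h/2) : i, j ∈ {-1, 0, 1, 2, 3}} be its set of 25 sentinel points. Then any closed axis-aligned square Q' of side length h/2 that intersects Q contains at least one sentinel point of S. -/

import Mathlib

open Metric

/-- An axis-aligned square [a,a+h] × [b,b+h] in the Euclidean plane. -/
def square (a b h : ℝ) : Set (EuclideanSpace ℝ (Fin 2)) :=
  {p | p 0 ∈ Set.Icc a (a + h) ∧ p 1 ∈ Set.Icc b (b + h)}

lemma key_1d (a c h : ℝ) (hh : 0 < h) (h1 : -(h/2) ≤ c - a) (h2 : c - a ≤ h) :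
    ∃ i : ℤ, -1 ≤ i ∧ i ≤ 3 ∧ c ≤ a + i * (h/2) ∧ a + i * (h/2) ≤ c + h/2 := by
  have hh2 : 0 < h/2 := by linarith
  refine ⟨⌈(c - a) / (h/2)⌉, ?_, ?_, ?_, ?_⟩
  · have : (-1 : ℝ) ≤ (c - a) / (h/2) := by
      rw [le_div_iff₀ hh2]; linarith
    exact_mod_cast this.trans (Int.le_ceil _)
  · have : (c - a) / (h/2) ≤ (3 : ℝ) := by
      rw [div_le_iff₀ hh2]; linarith
    exact_mod_cast Int.ceil_le.mpr (by exact_mod_cast this)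
  · have := Int.le_ceil ((c - a) / (h/2))
    have : (c - a) / (h/2) * (h/2) ≤ (⌈(c - a) / (h/2)⌉ : ℝ) * (h/2) :=
      mul_le_mul_of_nonneg_right this (le_of_lt hh2)
    rw [div_mul_cancel₀ _ (ne_of_gt hh2)] at this
    linarith
  · have := Int.ceil_lt_add_one ((c - a) / (h/2))
    have : (⌈(c - a) / (h/2)⌉ : ℝ) * (h/2) ≤ ((c - a) / (h/2) + 1) * (h/2) :=
      mul_le_mul_of_nonneg_right (le_of_lt this) (le_of_lt hh2)
    rw [add_mul, div_mul_cancel₀ _ (ne_of_gt hh2), one_mul] at this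
    linarith

/-- Any closed axis-aligned square of side h/2 that intersects
Q = [a,a+h] × [b,b+h] contains one of the 25 sentinel points
(a + i·h/2, b + j·h/2), i, j ∈ {-1,0,1,2,3}. -/
theorem stmt_6 (a b h c d : ℝ) (hh : 0 < h)
    (hint : (square c d (h / 2) ∩ square a b h).Nonempty) :
    ∃ p ∈ square c d (h / 2), ∃ i j : ℤ,
      -1 ≤ i ∧ i ≤ 3 ∧ -1 ≤ j ∧ j ≤ 3 ∧
      p 0 = a + i * (h / 2) ∧ p 1 = b + j * (h / 2) := by
  obtain ⟨q, ⟨⟨hq1, hq2⟩, ⟨hq3, hq4⟩⟩, ⟨⟨hq5, hq6⟩, ⟨hq7, hq8⟩⟩⟩ := hint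
  obtain ⟨i, hi1, hi2, hi3, hi4⟩ := key_1d a c h hh (by linarith) (by linarith)
  obtain ⟨j, hj1, hj2, hj3, hj4⟩ := key_1d b d h hh (by linarith) (by linarith)
  refine ⟨(WithLp.toLp 2 ![a + i * (h/2), b + j * (h/2)] : EuclideanSpace ℝ (Fin 2)), ⟨?_, ?_⟩, i, j,
    hi1, hi2, hj1, hj2, ?_, ?_⟩ <;> simp <;> constructor <;> linarith
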